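/- Let L : ℝ^{2d} × ℝ^{2d} → ℝ be a discrete Lagrangian L_d : ℝ^{2d} × ℝ^{2d} → ℝ (suppressing the fixed step size h), differentiable, and let Φ : ℝ → ℝ^{2d} → ℝ^{2d} be a one-parameter family of diffeomorphisms, differentiable in the parameter, with Φ_0 = id, such that L_d(Φ_s(y_k), Φ_s(y_{k+1})) = L_d(y_k, y_{k+1}) for all s, y_k, y_{k+1}. If a sequence y : Fin (N+1) → ℝ^{2d} satisfies the discrete Euler–Lagrange equations D₂L_d(y_{k−1}, y_k) + D₁L_d(y_k, y_{k+1}) = 0 for 1 ≤ k ≤ N−1, then the quantity I_k = D₂L_d(y_{k−1}, y_k) ⬝ (d/ds)|_{s=0} Φ_s(y_k) is constant in k for 1 ≤ k ≤ N, and equals −D₁L_d(y_k, y_{k+1}) ⬝ (d/ds)|_{s=0} Φ_s(y_k) for 0 ≤ k ≤ N−1. -/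

import Mathlib

/-- Discrete Noether theorem for an invariant discrete Lagrangian. -/
theorem stmt_5 (d N : ℕ)
    (Ld : (Fin (2*d) → ℝ) × (Fin (2*d) → ℝ) → ℝ)
    (hLd : Differentiable ℝ Ld)
    (Φ : ℝ → (Fin (2*d) → ℝ) → (Fin (2*d) → ℝ))
    (hΦdiffeo : ∀ s, Function.Bijective (Φ s))
    (hΦdiff : ∀ y, DifferentiableAt ℝ (fun s => Φ s y) 0)
    (hΦ0 : Φ 0 = id)
    (hinv : ∀ s yk yk1, Ld (Φ s yk, Φ s yk1) = Ld (yk, yk1))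
    -- infinitesimal generator
    (ξ : (Fin (2*d) → ℝ) → (Fin (2*d) → ℝ))
    (hξ : ∀ y, ξ y = deriv (fun s => Φ s y) 0)
    -- partial derivatives of the discrete Lagrangian
    (D₁ D₂ : (Fin (2*d) → ℝ) → (Fin (2*d) → ℝ) → (Fin (2*d) → ℝ) →L[ℝ] ℝ)
    (hD₁ : ∀ a b, D₁ a b = fderiv ℝ (fun x => Ld (x, b)) a)
    (hD₂ : ∀ a b, D₂ a b = fderiv ℝ (fun x => Ld (a, x)) b)
    (y : ℕ → (Fin (2*d) → ℝ))
    (hDEL : ∀ k : ℕ, 1 ≤ k → k ≤ N - 1 →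
      (fun w => D₂ (y (k-1)) (y k) w + D₁ (y k) (y (k+1)) w) = fun _ => (0:ℝ))
    (I : ℕ → ℝ)
    (hI : ∀ k : ℕ, I k = D₂ (y (k-1)) (y k) (ξ (y k))) :
    (∀ k l : ℕ, 1 ≤ k → k ≤ N → 1 ≤ l → l ≤ N → I k = I l) ∧
    (∀ k : ℕ, 1 ≤ k → k ≤ N - 1 →
      I k = -(D₁ (y k) (y (k+1)) (ξ (y k)))) := by
  -- second part is immediate from the DEL
  have hDEL' : ∀ k : ℕ, 1 ≤ k → k ≤ N - 1 → ∀ w,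
      D₂ (y (k-1)) (y k) w = -(D₁ (y k) (y (k+1)) w) := by
    intro k hk1 hk2 w
    have := congrFun (hDEL k hk1 hk2) w
    linarith
  -- Noether key identity
  have key : ∀ a b, D₁ a b (ξ a) + D₂ a b (ξ b) = 0 := by
    intro a b
    set F := fderiv ℝ Ld (a, b) with hF_def
    have hF : HasFDerivAt Ld F (a, b) := (hLd (a, b)).hasFDerivAt
    have hpa : HasDerivAt (fun s => Φ s a) (ξ a) 0 := by
      rw [hξ]; exact (hΦdiff a).hasDerivAt
    have hpb : HasDerivAt (fun s => Φ s b) (ξ b) 0 := by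
      rw [hξ]; exact (hΦdiff b).hasDerivAt
    have hpair : HasDerivAt (fun s => (Φ s a, Φ s b)) (ξ a, ξ b) 0 := hpa.prodMk hpb
    have h0 : (Φ 0 a, Φ 0 b) = (a, b) := by rw [hΦ0]; rfl
    have hcomp : HasDerivAt (fun s => Ld (Φ s a, Φ s b)) (F (ξ a, ξ b)) 0 := by
      have hF' : HasFDerivAt Ld F (Φ 0 a, Φ 0 b) := by rw [h0]; exact hF
      exact hF'.comp_hasDerivAt 0 hpair
    have hconst : (fun s : ℝ => Ld (Φ s a, Φ s b)) = fun _ => Ld (a, b) :=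
      funext fun s => hinv s a b
    have hzero : F (ξ a, ξ b) = 0 := by
      have h2 : HasDerivAt (fun s : ℝ => Ld (Φ s a, Φ s b)) 0 0 := by
        rw [hconst]; exact hasDerivAt_const 0 _
      exact hcomp.unique h2
    have hD1F : ∀ u, D₁ a b u = F (u, 0) := by
      intro u
      have h1 : HasFDerivAt (fun x => Ld (x, b))
          (F.comp (ContinuousLinearMap.inl ℝ _ _)) a :=
        hF.comp a (hasFDerivAt_prodMk_left a b)
      rw [hD₁, h1.fderiv]; rfl
    have hD2F : ∀ v, D₂ a b v = F (0, v) := by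
      intro v
      have h1 : HasFDerivAt (fun x => Ld (a, x))
          (F.comp (ContinuousLinearMap.inr ℝ _ _)) b :=
        hF.comp b (hasFDerivAt_prodMk_right a b)
      rw [hD₂, h1.fderiv]; rfl
    rw [hD1F, hD2F]
    have : ((ξ a, ξ b) : (Fin (2*d) → ℝ) × (Fin (2*d) → ℝ))
        = (ξ a, 0) + (0, ξ b) := by simp [Prod.ext_iff]
    rw [← hzero, this, map_add]
  -- step: I (k+1) = I k for 1 ≤ k ≤ N - 1
  have step : ∀ k : ℕ, 1 ≤ k → k ≤ N - 1 → I (k + 1) = I k := by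
    intro k hk1 hk2
    have h1 : I (k + 1) = D₂ (y k) (y (k+1)) (ξ (y (k+1))) := by
      rw [hI]; simp
    have h2 : D₂ (y k) (y (k+1)) (ξ (y (k+1))) = -(D₁ (y k) (y (k+1)) (ξ (y k))) := by
      have := key (y k) (y (k+1))
      linarith
    rw [h1, h2, ← hDEL' k hk1 hk2, hI]
  -- constancy: I k = I 1 for 1 ≤ k ≤ N
  have const : ∀ k : ℕ, 1 ≤ k → k ≤ N → I k = I 1 := by
    intro k
    induction k with
    | zero => intro h; omega
    | succ n ih =>
      intro h1 h2
      rcases Nat.eq_or_lt_of_le h1 with h | h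
      · rw [← h]
      · have hn1 : 1 ≤ n := by omega
        have hn2 : n ≤ N - 1 := by omega
        rw [step n hn1 hn2]
        exact ih hn1 (by omega)
  constructor
  · intro k l hk1 hk2 hl1 hl2
    rw [const k hk1 hk2, const l hl1 hl2]
  · intro k hk1 hk2
    rw [hI, hDEL' k hk1 hk2]
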